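/- Let A be an expanding integer n×n matrix and K ⊂ ℤⁿ finite. In the directed graph Γ with vertex set ℤⁿ and an edge u → v whenever u + x = y + A v for some x, y ∈ K, the nucleus 𝒩 (the set of vertices lying on a directed cycle or reachable by a directed path from a cycle) is finite. -/

import Mathlib

open Matrix Polynomial
open scoped ENNReal NNReal

def IsExpanding {n : ℕ} (A : Matrix (Fin n) (Fin n) ℤ) : Prop :=
  ∀ μ : ℂ, (A.map (Int.cast : ℤ → ℂ)).charpoly.IsRoot μ → 1 < ‖μ‖

lemma charpoly_eval_eq_det' {m : Type*} [Fintype m] [DecidableEq m]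
    (M : Matrix m m ℂ) (μ : ℂ) :
    M.charpoly.eval μ = ((algebraMap ℂ (Matrix m m ℂ)) μ - M).det := by
  rw [Matrix.charpoly, ← Polynomial.coe_evalRingHom, RingHom.map_det]
  congr 1
  ext i j
  by_cases h : i = j
  · subst h
    simp [Matrix.charmatrix_apply_eq, Matrix.algebraMap_matrix_apply]
  · simp [Matrix.charmatrix_apply_ne, h, Matrix.algebraMap_matrix_apply]

lemma mem_spectrum_iff_isRoot' {m : Type*} [Fintype m] [DecidableEq m]
    (M : Matrix m m ℂ) (μ : ℂ) :
    μ ∈ spectrum ℂ M ↔ M.charpoly.IsRoot μ := by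
  rw [spectrum.mem_iff, Matrix.isUnit_iff_isUnit_det, isUnit_iff_ne_zero, not_ne_iff,
    Polynomial.IsRoot, charpoly_eval_eq_det']

/-- in the graph `Γ(A,K)` on `ℤⁿ` with an edge `u → v` whenever
`u + x = y + Av` for some `x, y ∈ K`, the nucleus (vertices lying on a directed
cycle or reachable from a cycle) is finite. -/
theorem stmt17 {n : ℕ} (A : Matrix (Fin n) (Fin n) ℤ) (hA : IsExpanding A)
    (K : Finset (Fin n → ℤ)) :
    Set.Finite {v : Fin n → ℤ |
      ∃ u : Fin n → ℤ,
        Relation.TransGen (fun a b => ∃ x ∈ K, ∃ y ∈ K, a + x = y + A.mulVec b) u u ∧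
        Relation.ReflTransGen (fun a b => ∃ x ∈ K, ∃ y ∈ K, a + x = y + A.mulVec b) u v} := by
  classical
  rcases Nat.eq_zero_or_pos n with hn | hn
  · subst hn; exact Set.toFinite _
  haveI : Nonempty (Fin n) := ⟨⟨0, hn⟩⟩
  letI : NormedRing (Matrix (Fin n) (Fin n) ℂ) := Matrix.linftyOpNormedRing
  letI : NormedAlgebra ℂ (Matrix (Fin n) (Fin n) ℂ) := Matrix.linftyOpNormedAlgebra
  set Aℂ : Matrix (Fin n) (Fin n) ℂ := A.map (Int.cast : ℤ → ℂ) with hAc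
  set edge : (Fin n → ℤ) → (Fin n → ℤ) → Prop :=
    fun a b => ∃ x ∈ K, ∃ y ∈ K, a + x = y + A.mulVec b with hedge_def
  -- the determinant is nonzero
  have hdet : IsUnit Aℂ.det := by
    rw [isUnit_iff_ne_zero, Matrix.det_eq_prod_roots_charpoly]
    apply Multiset.prod_ne_zero
    intro h0
    have hroot : Aℂ.charpoly.IsRoot 0 := (Polynomial.mem_roots'.mp h0).2
    have := hA 0 hroot
    norm_num at this
  have hunit : IsUnit Aℂ := (Matrix.isUnit_iff_isUnit_det _).mpr hdet
  set B : Matrix (Fin n) (Fin n) ℂ := Aℂ⁻¹ with hB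
  -- the spectrum of B lies strictly inside the unit disc
  have hspec : ∀ z ∈ spectrum ℂ B, ‖z‖₊ < 1 := by
    intro z hz
    have hcoe : (hunit.unit : Matrix (Fin n) (Fin n) ℂ) = Aℂ := hunit.unit_spec
    have hBcoe : ((hunit.unit⁻¹ : (Matrix (Fin n) (Fin n) ℂ)ˣ) : Matrix (Fin n) (Fin n) ℂ) = B := by
      rw [Matrix.coe_units_inv, hcoe]
    rw [← hBcoe] at hz
    have hzinv : z⁻¹ ∈ spectrum ℂ (hunit.unit : Matrix (Fin n) (Fin n) ℂ) :=
      spectrum.inv₀_mem_iff.mpr hz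
    rw [hcoe] at hzinv
    have hroot : Aℂ.charpoly.IsRoot z⁻¹ := (mem_spectrum_iff_isRoot' _ _).mp hzinv
    have h1 : 1 < ‖z⁻¹‖ := hA _ hroot
    rw [norm_inv] at h1
    have hz0 : ‖z‖ ≠ 0 := by
      intro h; rw [h] at h1; norm_num at h1
    have habs : ‖z‖ < 1 := by
      have hpos : 0 < ‖z‖ := lt_of_le_of_ne (norm_nonneg z) (Ne.symm hz0)
      nlinarith [mul_inv_cancel₀ hz0, mul_pos hpos (lt_trans one_pos h1)]
    have : ‖z‖ < 1 := habs
    exact_mod_cast this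
  have hsr : spectralRadius ℂ B < 1 := by
    have := spectrum.spectralRadius_lt_of_forall_lt B (r := 1) hspec
    simpa using this
  -- Gelfand's formula: some power of B has norm < 1
  obtain ⟨k, hk1, hklt⟩ : ∃ k : ℕ, 1 ≤ k ∧ ‖B ^ k‖ < 1 := by
    have hg := spectrum.pow_nnnorm_pow_one_div_tendsto_nhds_spectralRadius B
    have hev : ∀ᶠ k : ℕ in Filter.atTop, (‖B ^ k‖₊ : ℝ≥0∞) ^ (1 / (k : ℝ)) < 1 :=
      hg.eventually_lt_const hsr
    obtain ⟨k, hklt, hk1⟩ := ((hev.and (Filter.eventually_ge_atTop 1)).exists)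
    refine ⟨k, hk1, ?_⟩
    by_contra h
    push_neg at h
    have h1 : (1 : ℝ≥0∞) ≤ (‖B ^ k‖₊ : ℝ≥0∞) := by
      rw [show ((1 : ℝ≥0∞)) = ((1 : ℝ≥0) : ℝ≥0∞) from rfl, ENNReal.coe_le_coe]
      have : (1 : ℝ) ≤ ‖B ^ k‖ := h
      exact_mod_cast this
    have h2 : (1 : ℝ≥0∞) ≤ (‖B ^ k‖₊ : ℝ≥0∞) ^ (1 / (k : ℝ)) := by
      calc (1 : ℝ≥0∞) = (1 : ℝ≥0∞) ^ (1 / (k : ℝ)) := (ENNReal.one_rpow _).symm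
        _ ≤ _ := ENNReal.rpow_le_rpow h1 (by positivity)
    exact absurd (lt_of_le_of_lt h2 hklt) (lt_irrefl _)
  have hkpos : (0 : ℝ) < (k : ℝ) := by exact_mod_cast hk1
  -- the contraction constant
  set c : ℝ := max (‖B ^ k‖ ^ (1 / (k : ℝ))) (1 / 2) with hc
  have hc0 : (0 : ℝ) < c := lt_of_lt_of_le one_half_pos (le_max_right _ _)
  have hc1 : c < 1 := by
    apply max_lt _ one_half_lt_one
    exact Real.rpow_lt_one (norm_nonneg _) hklt (by positivity)
  have hck : ‖B ^ k‖ ≤ c ^ k := by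
    have h1 : ((‖B ^ k‖ ^ (1 / (k : ℝ))) : ℝ) ^ k = ‖B ^ k‖ := by
      rw [← Real.rpow_natCast (‖B ^ k‖ ^ (1 / (k : ℝ))) k, ← Real.rpow_mul (norm_nonneg _),
        one_div_mul_cancel (ne_of_gt hkpos), Real.rpow_one]
    calc ‖B ^ k‖ = (‖B ^ k‖ ^ (1 / (k : ℝ))) ^ k := h1.symm
      _ ≤ c ^ k := pow_le_pow_left₀ (Real.rpow_nonneg (norm_nonneg _) _) (le_max_left _ _) k
  -- the adapted "norm"
  set ι : (Fin n → ℤ) → (Fin n → ℂ) := fun v i => ((v i : ℤ) : ℂ) with hι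
  set N : (Fin n → ℂ) → ℝ := fun v => ∑ j ∈ Finset.range k, ‖(B ^ j) *ᵥ v‖ / c ^ j with hN
  have hN0 : ∀ v, 0 ≤ N v := by
    intro v
    apply Finset.sum_nonneg
    intro j _
    positivity
  have hNnorm : ∀ v, ‖v‖ ≤ N v := by
    intro v
    have h0 : (0 : ℕ) ∈ Finset.range k := Finset.mem_range.mpr hk1
    have := Finset.single_le_sum (f := fun j => ‖(B ^ j) *ᵥ v‖ / c ^ j)
      (fun j _ => by positivity) h0
    simpa [Matrix.one_mulVec] using this
  have hNadd : ∀ v w, N (v + w) ≤ N v + N w := by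
    intro v w
    rw [hN, ← Finset.sum_add_distrib]
    apply Finset.sum_le_sum
    intro j _
    rw [← add_div]
    gcongr
    rw [Matrix.mulVec_add]
    exact norm_add_le _ _
  -- the contraction property
  have hNmul : ∀ v, N (B *ᵥ v) ≤ c * N v := by
    intro v
    obtain ⟨m, rfl⟩ : ∃ m, k = m + 1 := ⟨k - 1, (Nat.succ_pred_eq_of_pos hk1).symm⟩
    have hBj : ∀ j : ℕ, (B ^ j) *ᵥ (B *ᵥ v) = (B ^ (j + 1)) *ᵥ v := by
      intro j
      rw [Matrix.mulVec_mulVec, ← pow_succ]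
    have hL : N (B *ᵥ v) =
        (∑ j ∈ Finset.range m, ‖(B ^ (j + 1)) *ᵥ v‖ / c ^ j)
          + ‖(B ^ (m + 1)) *ᵥ v‖ / c ^ m := by
      rw [hN]
      simp only [hBj]
      exact Finset.sum_range_succ _ m
    have hRr : c * N v =
        (∑ j ∈ Finset.range m, ‖(B ^ (j + 1)) *ᵥ v‖ / c ^ j) + c * ‖v‖ := by
      rw [hN, Finset.mul_sum, Finset.sum_range_succ']
      congr 1
      · apply Finset.sum_congr rfl
        intro j _
        have hcne : c ≠ 0 := ne_of_gt hc0
        field_simp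
        ring
      · simp [Matrix.one_mulVec]
    rw [hL, hRr]
    gcongr
    have hb : ‖(B ^ (m + 1)) *ᵥ v‖ ≤ c ^ (m + 1) * ‖v‖ := by
      calc ‖(B ^ (m + 1)) *ᵥ v‖ ≤ ‖B ^ (m + 1)‖ * ‖v‖ :=
            Matrix.linfty_opNorm_mulVec _ _
        _ ≤ c ^ (m + 1) * ‖v‖ := by
            apply mul_le_mul_of_nonneg_right hck (norm_nonneg _)
    calc ‖(B ^ (m + 1)) *ᵥ v‖ / c ^ m ≤ (c ^ (m + 1) * ‖v‖) / c ^ m := by gcongr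
      _ = c * ‖v‖ := by
          rw [pow_succ]
          field_simp
  -- the additive constant
  obtain ⟨D, hD0, hD⟩ : ∃ D : ℝ, 0 ≤ D ∧
      ∀ x ∈ K, ∀ y ∈ K, N (B *ᵥ (ι x - ι y)) ≤ D := by
    have hfin : ((fun p : (Fin n → ℤ) × (Fin n → ℤ) => N (B *ᵥ (ι p.1 - ι p.2))) ''
        ↑(K ×ˢ K)).Finite := ((K ×ˢ K).finite_toSet).image _
    obtain ⟨D₀, hD₀⟩ := hfin.bddAbove
    refine ⟨max D₀ 0, le_max_right _ _, ?_⟩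
    intro x hx y hy
    refine le_trans (hD₀ ?_) (le_max_left _ _)
    exact ⟨(x, y), by simp [hx, hy], rfl⟩
  set R : ℝ := D / (1 - c) with hR
  have hc1' : (0 : ℝ) < 1 - c := by linarith
  have hDR : D = (1 - c) * R := by
    rw [hR]; field_simp
  have hR0 : 0 ≤ R := div_nonneg hD0 hc1'.le
  -- the single edge estimate
  have hedge : ∀ a b, edge a b → N (ι b) ≤ c * N (ι a) + D := by
    rintro a b ⟨x, hx, y, hy, hxy⟩
    have hcast : ι a + ι x = ι y + Aℂ *ᵥ ι b := by
      funext i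
      have h := congrFun hxy i
      have hmv : ((A *ᵥ b) i : ℂ) = (Aℂ *ᵥ ι b) i := by
        rw [hAc, hι]
        exact RingHom.map_mulVec (Int.castRingHom ℂ) A b i
      simp only [Pi.add_apply, hι]
      rw [← hmv]
      exact_mod_cast congrArg (Int.cast : ℤ → ℂ) h
    have h1 : Aℂ *ᵥ ι b = ι a + (ι x - ι y) := by
      have := hcast.symm
      rw [add_comm (ι y)] at this
      have h2 := sub_eq_of_eq_add this.symm
      rw [← h2]; abel
    have hb : ι b = B *ᵥ ι a + B *ᵥ (ι x - ι y) := by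
      calc ι b = (B * Aℂ) *ᵥ ι b := by
            rw [hB, Matrix.nonsing_inv_mul _ hdet, Matrix.one_mulVec]
        _ = B *ᵥ (Aℂ *ᵥ ι b) := (Matrix.mulVec_mulVec _ _ _).symm
        _ = B *ᵥ (ι a + (ι x - ι y)) := by rw [h1]
        _ = B *ᵥ ι a + B *ᵥ (ι x - ι y) := Matrix.mulVec_add _ _ _
    calc N (ι b) = N (B *ᵥ ι a + B *ᵥ (ι x - ι y)) := by rw [hb]
      _ ≤ N (B *ᵥ ι a) + N (B *ᵥ (ι x - ι y)) := hNadd _ _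
      _ ≤ c * N (ι a) + D := add_le_add (hNmul _) (hD x hx y hy)
  -- edges preserve the ball of radius R
  have hRstep : ∀ a b, edge a b → N (ι a) ≤ R → N (ι b) ≤ R := by
    intro a b h ha
    have h1 := hedge a b h
    nlinarith [hN0 (ι a)]
  -- edges strictly decrease N outside the ball
  have hdec : ∀ a b, edge a b → R < N (ι a) → N (ι b) < N (ι a) := by
    intro a b h ha
    have h1 := hedge a b h
    nlinarith
  -- vertices on a cycle lie in the ball
  have hcyc : ∀ u, Relation.TransGen edge u u → N (ι u) ≤ R := by
    intro u hu
    by_contra hgt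
    push_neg at hgt
    have key : ∀ w, Relation.TransGen edge u w → N (ι w) < N (ι u) := by
      intro w hw
      induction hw with
      | single h => exact hdec _ _ h hgt
      | @tail b' c' hb he ih =>
        rcases le_or_gt (N (ι b')) R with hble | hbgt
        · exact lt_of_le_of_lt (hRstep _ _ he hble) hgt
        · exact lt_trans (hdec _ _ he hbgt) ih
    exact absurd (key u hu) (lt_irrefl _)
  -- reachable vertices stay in the ball
  have hreach : ∀ u v, Relation.ReflTransGen edge u v → N (ι u) ≤ R → N (ι v) ≤ R := by
    intro u v h hu
    induction h with
    | refl => exact hu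
    | tail hb he ih => exact hRstep _ _ he ih
  -- conclude
  apply Set.Finite.subset (Set.Finite.pi fun _ : Fin n => Set.finite_Icc (-⌈R⌉) ⌈R⌉)
  rintro v ⟨u, hcycle, hpath⟩
  have hv : N (ι v) ≤ R := hreach u v hpath (hcyc u hcycle)
  have hnorm : ‖ι v‖ ≤ R := le_trans (hNnorm _) hv
  intro i _
  have hi : ‖ι v i‖ ≤ R := le_trans (norm_le_pi_norm (ι v) i) hnorm
  have hi' : |(v i : ℝ)| ≤ R := by
    rw [hι] at hi
    simpa using hi
  have hi'' : |v i| ≤ ⌈R⌉ := by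
    have h2 : ((|v i| : ℤ) : ℝ) ≤ (⌈R⌉ : ℝ) := by
      push_cast
      exact le_trans hi' (Int.le_ceil R)
    exact_mod_cast h2
  rw [Set.mem_Icc]
  exact abs_le.mp hi''
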